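/- arXiv:1309.3349 — 2 statements merged into one kernel-verified Lean document; each statement's English description precedes it below -/
import Mathlib

section
/- Let C be a finite EI category, k a field, and S a simple kC-module, regarded as a functor C → Vect_k. Then there is exactly one isomorphism class [x] of objects of C such that S(x) ≠ 0, and for any such x, S(x) is a simple module over the automorphism group Aut_C(x). -/
/-!
STATEMENT 5: Let `C` be a finite EI category, `k` a field and `S` a simple
`kC`-module (simple object of the functor category `C ⥤ Vect_k`). Then there is
exactly one isomorphism class `[x]` of objects with `S(x) ≠ 0`, and for such an
`x` the value `S(x)` is a simple module over the automorphism group `Aut_C(x)`.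
-/

open CategoryTheory


section Aux
variable {k : Type} [Field k] {C : Type} [SmallCategory C]

/-- The subfunctor determined by a family of submodules closed under the maps. -/
@[simps] def subFunctor (S : C ⥤ ModuleCat k) (P : ∀ y : C, Submodule k (S.obj y))
    (hP : ∀ {y z : C} (f : y ⟶ z), ∀ v ∈ P y, S.map f v ∈ P z) : C ⥤ ModuleCat k where
  obj y := ModuleCat.of k (P y)
  map {y z} f := ModuleCat.ofHom ((S.map f).hom.restrict (fun v hv => hP f v hv))
  map_id y := by
    ext v
    show (S.map (𝟙 y)) v.val = v.val
    rw [S.map_id]; rfl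
  map_comp {a b c} f g := by
    ext v
    show (S.map (f ≫ g)) v.val = (S.map g) ((S.map f) v.val)
    rw [S.map_comp]; rfl

@[simps] def subFunctorInc (S : C ⥤ ModuleCat k) (P : ∀ y : C, Submodule k (S.obj y))
    (hP : ∀ {y z : C} (f : y ⟶ z), ∀ v ∈ P y, S.map f v ∈ P z) :
    subFunctor S P hP ⟶ S where
  app y := ModuleCat.ofHom (P y).subtype
  naturality {y z} f := by
    ext v
    rfl

theorem key (S : C ⥤ ModuleCat k) (hS : Simple S)
    (P : ∀ y : C, Submodule k (S.obj y))
    (hP : ∀ {y z : C} (f : y ⟶ z), ∀ v ∈ P y, S.map f v ∈ P z)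
    (x : C) (hx : P x ≠ ⊥) : ∀ y : C, P y = ⊤ := by
  intro y
  let ι := subFunctorInc S P hP
  haveI : ∀ c : C, Mono (ι.app c) := by
    intro c
    rw [ModuleCat.mono_iff_injective]
    exact fun a b h => Subtype.ext h
  haveI : Mono ι := NatTrans.mono_of_mono_app ι
  obtain ⟨v, hv, hv0⟩ := Submodule.exists_mem_ne_zero_of_ne_bot hx
  have hne : ι ≠ 0 := by
    intro h
    have : ι.app x ⟨v, hv⟩ = 0 := by rw [h]; rfl
    exact hv0 (by rw [← this]; rfl)
  haveI : IsIso ι := isIso_of_mono_of_nonzero hne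
  haveI : IsIso (ι.app y) := inferInstance
  have hsurj : Function.Surjective (ι.app y) :=
    (ModuleCat.epi_iff_surjective (ι.app y)).mp inferInstance
  rw [Submodule.eq_top_iff']
  intro w
  obtain ⟨⟨w', hw'⟩, rfl⟩ := hsurj w
  have e : (ConcreteCategory.hom (ι.app y)) ⟨w', hw'⟩ = w' := rfl
  rw [e]; exact hw'

/-- The subfunctor generated by a submodule of `S.obj x`. -/
def genP (S : C ⥤ ModuleCat k) (x : C) (p₀ : Submodule k (S.obj x)) :
    ∀ y : C, Submodule k (S.obj y) :=
  fun y => Submodule.span k {v : S.obj y | ∃ f : x ⟶ y, ∃ w ∈ p₀, S.map f w = v}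

theorem genP_closed (S : C ⥤ ModuleCat k) (x : C) (p₀ : Submodule k (S.obj x))
    {y z : C} (g : y ⟶ z) : ∀ v ∈ genP S x p₀ y, S.map g v ∈ genP S x p₀ z := by
  intro v hv
  have h : genP S x p₀ y ≤ (genP S x p₀ z).comap (S.map g).hom := by
    apply Submodule.span_le.2
    rintro _ ⟨f, w, hw, rfl⟩
    refine Submodule.subset_span ⟨f ≫ g, w, hw, ?_⟩
    rw [S.map_comp]; rfl
  exact h hv

theorem self_le_genP (S : C ⥤ ModuleCat k) (x : C) (p₀ : Submodule k (S.obj x)) :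
    p₀ ≤ genP S x p₀ x := by
  intro w hw
  refine Submodule.subset_span ⟨𝟙 x, w, hw, ?_⟩
  rw [S.map_id]; rfl

theorem top_ne_bot' {M : Type*} [AddCommGroup M] [Module k M] [Nontrivial M] :
    (⊤ : Submodule k M) ≠ ⊥ := by
  intro h
  obtain ⟨v, hv⟩ := exists_ne (0 : M)
  exact hv ((Submodule.mem_bot k).mp (h ▸ Submodule.mem_top))

theorem genP_top_ne_bot (S : C ⥤ ModuleCat k) (x : C) [Nontrivial (S.obj x)] :
    genP S x ⊤ x ≠ ⊥ := by
  intro h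
  have h2 := self_le_genP S x ⊤
  rw [h] at h2
  exact top_ne_bot' (k := k) (M := ↑(S.obj x)) (le_antisymm h2 bot_le)

theorem hom_nonempty (S : C ⥤ ModuleCat k) (hS : Simple S) (x y : C)
    [Nontrivial (S.obj x)] [Nontrivial (S.obj y)] : Nonempty (x ⟶ y) := by
  by_contra h
  have hall := key S hS (genP S x ⊤) (fun {a b} f => genP_closed S x ⊤ f) x
    (genP_top_ne_bot S x) y
  have hempty : {v : S.obj y | ∃ f : x ⟶ y, ∃ w ∈ (⊤ : Submodule k (S.obj x)),
      S.map f w = v} = ∅ := by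
    ext v
    simp only [Set.mem_setOf_eq, Set.mem_empty_iff_false, iff_false]
    rintro ⟨f, -⟩
    exact h ⟨f⟩
  have : genP S x ⊤ y = ⊥ := by
    rw [genP, hempty, Submodule.span_empty]
  rw [hall] at this
  exact top_ne_bot' (k := k) (M := ↑(S.obj y)) this

end Aux

theorem simple_module_concentrated_on_one_iso_class
    (k : Type) [Field k] (C : Type) [SmallCategory C] [Fintype C]
    [∀ x y : C, Fintype (x ⟶ y)]
    (hEI : ∀ (x : C) (f : x ⟶ x), IsIso f)
    (S : C ⥤ ModuleCat k) (hS : Simple S) :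
    ∃ x : C,
      -- `S(x) ≠ 0`
      Nontrivial (S.obj x) ∧
      -- uniqueness of the isomorphism class `[x]`: any object with nonzero value
      -- is isomorphic to `x`
      (∀ y : C, Nontrivial (S.obj y) → Nonempty (y ≅ x)) ∧
      -- `S(x)` is a simple `k Aut_C(x)`-module: every `Aut_C(x)`-invariant
      -- subspace is `⊥` or `⊤`
      (∀ p : Submodule k (S.obj x),
        (∀ (g : Aut x) (v : S.obj x), v ∈ p → S.map g.hom v ∈ p) → p = ⊥ ∨ p = ⊤) := by
  -- existence of `x` with `S.obj x` nontrivial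
  have hex : ∃ x : C, Nontrivial (S.obj x) := by
    by_contra h
    push_neg at h
    have hz : ∀ x : C, Limits.IsZero (S.obj x) := by
      intro x
      have : Subsingleton (S.obj x) := h x
      exact ModuleCat.isZero_of_subsingleton _
    exact Simple.not_isZero S (Functor.isZero S hz)
  obtain ⟨x, hx⟩ := hex
  haveI := hx
  refine ⟨x, hx, ?_, ?_⟩
  · -- uniqueness of the iso class
    intro y hy
    haveI := hy
    obtain ⟨f⟩ := hom_nonempty S hS x y
    obtain ⟨g⟩ := hom_nonempty S hS y x
    haveI : IsIso (f ≫ g) := hEI x (f ≫ g)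
    haveI : IsIso (g ≫ f) := hEI y (g ≫ f)
    haveI : Epi g := epi_of_epi f g
    refine ⟨⟨g, f ≫ inv (g ≫ f), ?_, ?_⟩⟩
    · rw [← Category.assoc, IsIso.hom_inv_id]
    · rw [← cancel_epi g, ← Category.assoc, ← Category.assoc, IsIso.hom_inv_id,
        Category.id_comp, Category.comp_id]
  · -- simplicity over `Aut x`
    intro p hinv
    by_cases hp : p = ⊥
    · exact Or.inl hp
    right
    have hPx : genP S x p x = p := by
      refine le_antisymm ?_ (self_le_genP S x p)
      apply Submodule.span_le.2
      rintro _ ⟨f, w, hw, rfl⟩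
      haveI := hEI x f
      exact hinv (asIso f) w hw
    have := key S hS (genP S x p) (fun {a b} f => genP_closed S x p f) x
      (by rw [hPx]; exact hp) x
    rw [hPx] at this
    exact this
end

section
/- Let C be a finite EI category and k a field. If a bounded complex ℂ of kC-modules satisfies ℂ^{⊗̂ n} ≅ 0 in the bounded derived category D^b(kC-mod) for some n ≥ 1, then ℂ ≅ 0 in D^b(kC-mod). In other words, the tensor triangulated category D^b(kC-mod) has no nonzero nilpotent objects. -/
/-!
STATEMENT 7: Let `C` be a finite EI category and `k` a field.  If a bounded
complex `ℂ` of `kC`-modules satisfies `ℂ^{⊗̂ n} ≅ 0` in `D^b(kC-mod)` for some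
`n ≥ 1`, then `ℂ ≅ 0` in `D^b(kC-mod)`: the tensor triangulated category
`D^b(kC-mod)` has no nonzero nilpotent objects.  (A bounded complex is `≅ 0` in
the derived category iff it is acyclic.)
-/

open CategoryTheory MonoidalCategory Limits

variable (k : Type) [Field k] (C : Type) [SmallCategory C] [Fintype C]
  [∀ x y : C, Fintype (x ⟶ y)]

-- standard facts making `CochainComplex (C ⥤ ModuleCat k) ℤ` a monoidal category
-- (pointwise tensor product of functors, totalized over the complex grading)
variable [(curriedTensor (C ⥤ ModuleCat k)).Additive]
  [∀ X : C ⥤ ModuleCat k, ((curriedTensor (C ⥤ ModuleCat k)).obj X).Additive]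
  [∀ X : C ⥤ ModuleCat k,
    PreservesColimit (Functor.empty.{0} (C ⥤ ModuleCat k)) ((curriedTensor (C ⥤ ModuleCat k)).obj X)]
  [∀ X : C ⥤ ModuleCat k,
    PreservesColimit (Functor.empty.{0} (C ⥤ ModuleCat k)) ((curriedTensor (C ⥤ ModuleCat k)).flip.obj X)]
  [∀ X₁ X₂ X₃ X₄ : GradedObject ℤ (C ⥤ ModuleCat k), GradedObject.HasTensor₄ObjExt X₁ X₂ X₃ X₄]
  [∀ X₁ X₂ X₃ : GradedObject ℤ (C ⥤ ModuleCat k), GradedObject.HasGoodTensor₁₂Tensor X₁ X₂ X₃]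
  [∀ X₁ X₂ X₃ : GradedObject ℤ (C ⥤ ModuleCat k), GradedObject.HasGoodTensorTensor₂₃ X₁ X₂ X₃]

/-- `n`-th tensor power of a complex of `kC`-modules (with `K^{⊗ 0}` the unit). -/
noncomputable def tensorPow (K : CochainComplex (C ⥤ ModuleCat k) ℤ) :
    ℕ → CochainComplex (C ⥤ ModuleCat k) ℤ
  | 0 => 𝟙_ (CochainComplex (C ⥤ ModuleCat k) ℤ)
  | n + 1 => tensorObj (tensorPow K n) K

namespace NilpotentAux

/-- The coinduced functor: `y ↦ ((y ⟶ x) → k)`, with `Hom(M, coind x) ≃ (M.obj x →ₗ[k] k)`. -/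
@[simps]
def coind (x : C) : C ⥤ ModuleCat k where
  obj y := ModuleCat.of k ((y ⟶ x) → k)
  map {y y'} g := ModuleCat.ofHom (LinearMap.funLeft k k (fun h : y' ⟶ x => g ≫ h))
  map_id y := by
    ext η h
    change η (𝟙 y ≫ h) = η h
    rw [Category.id_comp]
  map_comp {y y' y''} g g' := by
    ext η h
    change η ((g ≫ g') ≫ h) = η (g ≫ (g' ≫ h))
    rw [Category.assoc]

/-- Morphism `M ⟶ coind x` induced by a functional on `M.obj x`. -/
@[simps]
def coindLift (x : C) (M : C ⥤ ModuleCat k) (α : M.obj x →ₗ[k] k) : M ⟶ coind k C x where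
  app y := ModuleCat.ofHom
    { toFun := fun m => fun h => α ((M.map h) m)
      map_add' := fun m m' => by
        funext h
        change α ((M.map h) (m + m')) = α ((M.map h) m) + α ((M.map h) m')
        rw [map_add, map_add]
      map_smul' := fun c m => by
        funext h
        change α ((M.map h) (c • m)) = (c • fun h => α ((M.map h) m)) h
        rw [map_smul, map_smul]
        rfl }
  naturality {y y'} g := by
    ext m
    funext h
    change α (M.map h (M.map g m)) = α (M.map (g ≫ h) m)
    rw [M.map_comp]
    rfl

lemma coindLift_app_id (x : C) (M : C ⥤ ModuleCat k) (α : M.obj x →ₗ[k] k)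
    (m : M.obj x) : (coindLift k C x M α).app x m (𝟙 x) = α m := by
  change α ((M.map (𝟙 x)) m) = α m
  rw [M.map_id]
  rfl

lemma comp_coindLift_eq_zero (x : C) {N M : C ⥤ ModuleCat k} (f : N ⟶ M)
    (α : M.obj x →ₗ[k] k) (hα : ∀ n : N.obj x, α (f.app x n) = 0) :
    f ≫ coindLift k C x M α = 0 := by
  ext y n
  funext h
  change α ((M.map h) (f.app y n)) = _
  have : (M.map h) (f.app y n) = f.app x ((N.map h) n) := by
    have := f.naturality h
    exact congrFun (congrArg (fun (g : N.obj y ⟶ M.obj x) => (g : N.obj y → M.obj x)) this.symm) n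
  rw [this, hα]
  rfl

end NilpotentAux

set_option linter.unusedSectionVars false

namespace NilpotentAux

variable {k C}

/-- A witness of non-exactness of `M` at `p`, seen at the object `x`. -/
def HasWitness (M : CochainComplex (C ⥤ ModuleCat k) ℤ) (x : C) (p : ℤ) : Prop :=
  ∃ (u : (M.X p).obj x) (φ : ((M.X p).obj x : Type) →ₗ[k] k),
    (∀ j : ℤ, (M.d p j).app x u = 0) ∧
    (∀ (a : ℤ) (v : (M.X a).obj x), φ ((M.d a p).app x v) = 0) ∧ φ u = 1

lemma exactAt_iff_forall_eval (M : CochainComplex (C ⥤ ModuleCat k) ℤ) (p : ℤ) :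
    M.ExactAt p ↔ ∀ x : C,
      ((M.sc' (p-1) p (p+1)).map ((evaluation C (ModuleCat k)).obj x)).Exact := by
  rw [M.exactAt_iff' (p-1) p (p+1) (by simp) (by simp)]
  set S := M.sc' (p-1) p (p+1)
  rw [S.exact_iff_isZero_homology]
  rw [Functor.isZero_iff]
  apply forall_congr'
  intro x
  rw [ShortComplex.exact_iff_isZero_homology]
  exact Iso.isZero_iff (S.mapHomologyIso ((evaluation C (ModuleCat k)).obj x)).symm

lemma HasWitness.not_exactAt {M : CochainComplex (C ⥤ ModuleCat k) ℤ} {x : C} {p : ℤ}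
    (h : HasWitness M x p) : ¬ M.ExactAt p := by
  obtain ⟨u, φ, hdu, hφd, hφu⟩ := h
  rw [exactAt_iff_forall_eval]
  intro hex
  have := (ShortComplex.moduleCat_exact_iff _).1 (hex x) u (hdu (p+1))
  obtain ⟨v, hv⟩ := this
  have : φ u = 0 := by
    rw [← hv]
    exact hφd (p-1) v
  rw [hφu] at this
  exact one_ne_zero this

lemma hasWitness_of_not_exactAt {M : CochainComplex (C ⥤ ModuleCat k) ℤ} {p : ℤ}
    (h : ¬ M.ExactAt p) : ∃ x : C, HasWitness M x p := by
  rw [exactAt_iff_forall_eval] at h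
  push_neg at h
  obtain ⟨x, hx⟩ := h
  rw [ShortComplex.moduleCat_exact_iff] at hx
  push_neg at hx
  obtain ⟨u, hu0, hu⟩ := hx
  refine ⟨x, u, ?_⟩
  -- construct the functional
  set B : Submodule k ((M.X p).obj x) := LinearMap.range ((M.d (p-1) p).app x).hom with hB
  have huB : u ∉ B := by
    rintro ⟨v, hv⟩
    exact hu v hv
  have hquot : (B.mkQ u) ≠ 0 := fun hz =>
    huB ((Submodule.Quotient.mk_eq_zero B).1 hz)
  have : ∃ ψ : Module.Dual k (((M.X p).obj x : Type) ⧸ B), ψ (B.mkQ u) ≠ 0 := by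
    by_contra hcon
    push_neg at hcon
    exact hquot ((Module.forall_dual_apply_eq_zero_iff k _).1 hcon)
  obtain ⟨ψ, hψ⟩ := this
  change ψ (Submodule.Quotient.mk (p := B) u) ≠ 0 at hψ
  refine ⟨(ψ (B.mkQ u))⁻¹ • (ψ.comp B.mkQ), ?_, ?_, ?_⟩
  · intro j
    by_cases hj : (ComplexShape.up ℤ).Rel p j
    · obtain rfl : j = p + 1 := by simpa using hj.symm
      exact hu0
    · rw [M.shape p j hj]
      rfl
  · intro a v
    by_cases ha : (ComplexShape.up ℤ).Rel a p
    · obtain rfl : a = p - 1 := by simp only [ComplexShape.up_Rel] at ha; omega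
      have : (M.d (p-1) p).app x v ∈ B := ⟨v, rfl⟩
      have hz : B.mkQ ((M.d (p-1) p).app x v) = 0 := by
        rwa [Submodule.mkQ_apply, Submodule.Quotient.mk_eq_zero]
      simp only [LinearMap.smul_apply, LinearMap.comp_apply, hz, map_zero, smul_zero]
    · rw [M.shape a p ha]
      have h0 : ((0 : M.X a ⟶ M.X p)).app x v = (0 : (M.X p).obj x) := rfl
      rw [h0]
      simp
  · change (ψ (Submodule.Quotient.mk (p := B) u))⁻¹ * ψ (Submodule.Quotient.mk (p := B) u) = 1
    rw [inv_mul_cancel₀ hψ]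

lemma HasWitness.of_iso {M N : CochainComplex (C ⥤ ModuleCat k) ℤ} (e : M ≅ N) {x : C} {p : ℤ}
    (h : HasWitness N x p) : HasWitness M x p := by
  obtain ⟨u, φ, hdu, hφd, hφu⟩ := h
  refine ⟨(e.inv.f p).app x u, φ.comp ((e.hom.f p).app x).hom, ?_, ?_, ?_⟩
  · intro j
    have comm := e.inv.comm p j
    have := congrFun (congrArg (fun (g : N.X p ⟶ M.X j) => ((g.app x : _ → _))) comm) u
    dsimp at this
    change ((e.inv.f p ≫ M.d p j).app x) u = 0
    rw [comm]
    change (e.inv.f j).app x ((N.d p j).app x u) = 0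
    rw [hdu j, map_zero]
  · intro a v
    have comm := e.hom.comm a p
    change φ (((M.d a p ≫ e.hom.f p).app x) v) = 0
    rw [← comm]
    change φ ((e.hom.f a ≫ N.d a p).app x v) = 0
    change φ ((N.d a p).app x ((e.hom.f a).app x v)) = 0
    rw [hφd]
  · change φ (((e.inv.f p ≫ e.hom.f p).app x) u) = 1
    have : e.inv.f p ≫ e.hom.f p = 𝟙 (N.X p) := by
      rw [← HomologicalComplex.comp_f, e.inv_hom_id, HomologicalComplex.id_f]
    rw [this]
    change φ u = 1
    exact hφu

end NilpotentAux

namespace NilpotentAux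
section Tensor

open HomologicalComplex

variable [(curriedTensor (C ⥤ ModuleCat k)).Additive]
  [∀ X : C ⥤ ModuleCat k, ((curriedTensor (C ⥤ ModuleCat k)).obj X).Additive]
  [∀ X : C ⥤ ModuleCat k,
    PreservesColimit (Functor.empty.{0} (C ⥤ ModuleCat k)) ((curriedTensor (C ⥤ ModuleCat k)).obj X)]
  [∀ X : C ⥤ ModuleCat k,
    PreservesColimit (Functor.empty.{0} (C ⥤ ModuleCat k)) ((curriedTensor (C ⥤ ModuleCat k)).flip.obj X)]
  [∀ X₁ X₂ X₃ X₄ : GradedObject ℤ (C ⥤ ModuleCat k), GradedObject.HasTensor₄ObjExt X₁ X₂ X₃ X₄]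
  [∀ X₁ X₂ X₃ : GradedObject ℤ (C ⥤ ModuleCat k), GradedObject.HasGoodTensor₁₂Tensor X₁ X₂ X₃]
  [∀ X₁ X₂ X₃ : GradedObject ℤ (C ⥤ ModuleCat k), GradedObject.HasGoodTensorTensor₂₃ X₁ X₂ X₃]

lemma units_smul_app_apply {M N : C ⥤ ModuleCat k} (ε : ℤˣ) (f : M ⟶ N) (x : C)
    (t : M.obj x) (h : f.app x t = 0) : (ε • f).app x t = 0 := by
  rw [Units.smul_def, NatTrans.app_zsmul]
  change ((ε : ℤ) • (f.app x).hom) t = 0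
  rw [LinearMap.smul_apply, h, smul_zero]


/-- Extension of a functional in a single degree to a (dite) family over all degrees. -/
noncomputable def funFam (K : CochainComplex (C ⥤ ModuleCat k) ℤ) (x : C) (p : ℤ)
    (φ : ((K.X p).obj x : Type) →ₗ[k] k) (a : ℤ) : ((K.X a).obj x : Type) →ₗ[k] k :=
  if h : a = p then φ.comp ((eqToHom (by rw [h]) : K.X a ⟶ K.X p).app x).hom else 0

lemma funFam_self (K : CochainComplex (C ⥤ ModuleCat k) ℤ) (x : C) (p : ℤ)
    (φ : ((K.X p).obj x : Type) →ₗ[k] k) (w : (K.X p).obj x) :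
    funFam k C K x p φ p w = φ w := by
  rw [funFam, dif_pos rfl, eqToHom_refl]
  change φ ((𝟙 ((K.X p).obj x) : _ ⟶ _) w) = φ w
  rfl

lemma funFam_d (K : CochainComplex (C ⥤ ModuleCat k) ℤ) (x : C) (p : ℤ)
    (φ : ((K.X p).obj x : Type) →ₗ[k] k)
    (hφd : ∀ (a : ℤ) (v : (K.X a).obj x), φ ((K.d a p).app x v) = 0)
    (a a' : ℤ) (w : (K.X a).obj x) :
    funFam k C K x p φ a' ((K.d a a').app x w) = 0 := by
  by_cases h : a' = p
  · subst h
    rw [funFam_self]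
    exact hφd a w
  · rw [funFam, dif_neg h]
    rfl

/-- The product functional on a summand of the tensor product. -/
noncomputable def bilFam (K L : CochainComplex (C ⥤ ModuleCat k) ℤ) (x : C) (p q : ℤ)
    (φ : ((K.X p).obj x : Type) →ₗ[k] k) (ψ : ((L.X q).obj x : Type) →ₗ[k] k) (a b : ℤ) :
    ((((curriedTensor (C ⥤ ModuleCat k)).obj (K.X a)).obj (L.X b)).obj x : Type) →ₗ[k] k :=
  TensorProduct.lift ((LinearMap.mul k k).compl₁₂ (funFam k C K x p φ a) (funFam k C L x q ψ b))

lemma bilFam_tmul (K L : CochainComplex (C ⥤ ModuleCat k) ℤ) (x : C) (p q : ℤ)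
    (φ : ((K.X p).obj x : Type) →ₗ[k] k) (ψ : ((L.X q).obj x : Type) →ₗ[k] k) (a b : ℤ)
    (w : (K.X a).obj x) (z : (L.X b).obj x) :
    bilFam k C K L x p q φ ψ a b (w ⊗ₜ[k] z)
      = funFam k C K x p φ a w * funFam k C L x q ψ b z := by
  rw [bilFam]
  erw [TensorProduct.lift.tmul]
  rfl

lemma HasWitness.tensor {K L : CochainComplex (C ⥤ ModuleCat k) ℤ} {x : C} {p q : ℤ}
    (hK : HasWitness K x p) (hL : HasWitness L x q) :
    HasWitness (HomologicalComplex.tensorObj K L) x (p + q) := by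
  classical
  obtain ⟨u, φ, hdu, hφd, hφu⟩ := hK
  obtain ⟨v, ψ, hdv, hψd, hψv⟩ := hL
  set Fc := curriedTensor (C ⥤ ModuleCat k) with hFc
  set cc := ComplexShape.up ℤ with hcc
  set T := HomologicalComplex.tensorObj K L with hT
  -- functional families
  let Φ := funFam k C K x p φ
  let Ψ := funFam k C L x q ψ
  have hΦp : ∀ w, Φ p w = φ w := funFam_self k C K x p φ
  have hΨq : ∀ w, Ψ q w = ψ w := funFam_self k C L x q ψ
  have hΦd : ∀ (a a' : ℤ) (w : (K.X a).obj x), Φ a' ((K.d a a').app x w) = 0 :=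
    funFam_d k C K x p φ hφd
  have hΨd : ∀ (b b' : ℤ) (w : (L.X b).obj x), Ψ b' ((L.d b b').app x w) = 0 :=
    funFam_d k C L x q ψ hψd
  -- the bilinear functionals on the summands
  let α := bilFam k C K L x p q φ ψ
  have hα : ∀ (a b : ℤ) (w : (K.X a).obj x) (z : (L.X b).obj x),
      α a b (w ⊗ₜ[k] z) = Φ a w * Ψ b z := bilFam_tmul k C K L x p q φ ψ
  -- the descent morphism
  let Φmap : T.X (p+q) ⟶ coind k C x :=
    mapBifunctorDesc (fun a b _ => coindLift k C x ((Fc.obj (K.X a)).obj (L.X b)) (α a b))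
  let φ'' : ((T.X (p+q)).obj x : Type) →ₗ[k] k :=
    (LinearMap.proj (𝟙 x)).comp ((Φmap.app x).hom : (T.X (p+q)).obj x →ₗ[k] (coind k C x).obj x)
  let ι := ιMapBifunctor K L Fc cc p q (p+q) rfl
  let u'' : ((T.X (p+q)).obj x : Type) := ι.app x (u ⊗ₜ[k] v)
  -- key vanishing of legs
  have key1 : ∀ (a a' b : ℤ),
      ((Fc.map (K.d a a')).app (L.X b)) ≫ coindLift k C x ((Fc.obj (K.X a')).obj (L.X b)) (α a' b) = 0 := by
    intro a a' b
    apply comp_coindLift_eq_zero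
    intro t
    change α a' b (((Fc.map (K.d a a')).app (L.X b)).app x t) = 0
    induction t using TensorProduct.induction_on with
    | zero => exact (congrArg (α a' b) (map_zero _)).trans (map_zero _)
    | tmul w z =>
        have : ((Fc.map (K.d a a')).app (L.X b)).app x (w ⊗ₜ[k] z)
            = ((K.d a a').app x w) ⊗ₜ[k] z := rfl
        rw [this, hα, hΦd, zero_mul]
    | add t₁ t₂ h₁ h₂ =>
        exact (congrArg (α a' b) (map_add _ t₁ t₂)).trans ((map_add _ _ _).trans (by erw [h₁, h₂, add_zero]))
  have key2 : ∀ (a b b' : ℤ),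
      ((Fc.obj (K.X a)).map (L.d b b')) ≫ coindLift k C x ((Fc.obj (K.X a)).obj (L.X b')) (α a b') = 0 := by
    intro a b b'
    apply comp_coindLift_eq_zero
    intro t
    change α a b' (((Fc.obj (K.X a)).map (L.d b b')).app x t) = 0
    induction t using TensorProduct.induction_on with
    | zero => exact (congrArg (α a b') (map_zero _)).trans (map_zero _)
    | tmul w z =>
        have : ((Fc.obj (K.X a)).map (L.d b b')).app x (w ⊗ₜ[k] z)
            = w ⊗ₜ[k] ((L.d b b').app x z) := rfl
        rw [this, hα, hΨd, mul_zero]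
    | add t₁ t₂ h₁ h₂ =>
        exact (congrArg (α a b') (map_add _ t₁ t₂)).trans ((map_add _ _ _).trans (by erw [h₁, h₂, add_zero]))
  refine ⟨u'', φ'', ?_, ?_, ?_⟩
  · -- the cocycle condition
    intro j
    have hι : ι ≫ T.d (p+q) j
        = mapBifunctor.d₁ K L Fc cc p q j + mapBifunctor.d₂ K L Fc cc p q j := by
      rw [mapBifunctor.d_eq, Preadditive.comp_add, mapBifunctor.ι_D₁, mapBifunctor.ι_D₂]
    have h1 : (mapBifunctor.d₁ K L Fc cc p q j).app x (u ⊗ₜ[k] v) = 0 := by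
      rw [mapBifunctor.d₁_eq' K L Fc cc (show cc.Rel p (p+1) from rfl) q j]
      apply units_smul_app_apply
      have : (((Fc.map (K.d p (p+1))).app (L.X q)) ≫ ιMapBifunctorOrZero K L Fc cc (p+1) q j).app x (u ⊗ₜ[k] v)
          = (ιMapBifunctorOrZero K L Fc cc (p+1) q j).app x (((K.d p (p+1)).app x u) ⊗ₜ[k] v) := rfl
      rw [this, hdu (p+1), TensorProduct.zero_tmul]; exact map_zero _
    have h2 : (mapBifunctor.d₂ K L Fc cc p q j).app x (u ⊗ₜ[k] v) = 0 := by
      rw [mapBifunctor.d₂_eq' K L Fc cc p (show cc.Rel q (q+1) from rfl) j]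
      apply units_smul_app_apply
      have : (((Fc.obj (K.X p)).map (L.d q (q+1))) ≫ ιMapBifunctorOrZero K L Fc cc p (q+1) j).app x (u ⊗ₜ[k] v)
          = (ιMapBifunctorOrZero K L Fc cc p (q+1) j).app x (u ⊗ₜ[k] ((L.d q (q+1)).app x v)) := rfl
      rw [this, hdv (q+1), TensorProduct.tmul_zero]; exact map_zero _
    change ((ι ≫ T.d (p+q) j).app x) (u ⊗ₜ[k] v) = 0
    rw [hι, NatTrans.app_add]
    change (mapBifunctor.d₁ K L Fc cc p q j).app x (u ⊗ₜ[k] v) + (mapBifunctor.d₂ K L Fc cc p q j).app x (u ⊗ₜ[k] v) = 0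
    rw [h1, h2, add_zero]
  · -- killing boundaries
    intro a w
    have Hd : T.d a (p+q) ≫ Φmap = 0 := by
      apply mapBifunctor.hom_ext
      intro a₁ b₁ h
      rw [comp_zero, ← Category.assoc]
      have hι : ιMapBifunctor K L Fc cc a₁ b₁ a h ≫ T.d a (p+q)
          = mapBifunctor.d₁ K L Fc cc a₁ b₁ (p+q) + mapBifunctor.d₂ K L Fc cc a₁ b₁ (p+q) := by
        rw [mapBifunctor.d_eq, Preadditive.comp_add, mapBifunctor.ι_D₁, mapBifunctor.ι_D₂]
      rw [hι, Preadditive.add_comp]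
      have e1 : mapBifunctor.d₁ K L Fc cc a₁ b₁ (p+q) ≫ Φmap = 0 := by
        rw [mapBifunctor.d₁_eq' K L Fc cc (show cc.Rel a₁ (a₁+1) from rfl) b₁ (p+q),
          Units.smul_def, Preadditive.zsmul_comp]
        by_cases hc : ComplexShape.π cc cc cc (a₁+1, b₁) = p+q
        · rw [ιMapBifunctorOrZero_eq K L Fc cc (a₁+1) b₁ (p+q) hc, Category.assoc,
            ι_mapBifunctorDesc, key1, smul_zero]
        · rw [ιMapBifunctorOrZero_eq_zero K L Fc cc (a₁+1) b₁ (p+q) hc, comp_zero,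
            zero_comp, smul_zero]
      have e2 : mapBifunctor.d₂ K L Fc cc a₁ b₁ (p+q) ≫ Φmap = 0 := by
        rw [mapBifunctor.d₂_eq' K L Fc cc a₁ (show cc.Rel b₁ (b₁+1) from rfl) (p+q),
          Units.smul_def, Preadditive.zsmul_comp]
        by_cases hc : ComplexShape.π cc cc cc (a₁, b₁+1) = p+q
        · rw [ιMapBifunctorOrZero_eq K L Fc cc a₁ (b₁+1) (p+q) hc, Category.assoc,
            ι_mapBifunctorDesc, key2, smul_zero]
        · rw [ιMapBifunctorOrZero_eq_zero K L Fc cc a₁ (b₁+1) (p+q) hc, comp_zero,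
            zero_comp, smul_zero]
      rw [e1, e2, add_zero]
    have hz : (T.d a (p+q) ≫ Φmap).app x w = 0 := by rw [Hd]; rfl
    have : φ'' ((T.d a (p+q)).app x w) = ((T.d a (p+q) ≫ Φmap).app x w) (𝟙 x) := rfl
    rw [this, hz]
    rfl
  · -- pairing equals one
    have hone : ι ≫ Φmap = coindLift k C x ((Fc.obj (K.X p)).obj (L.X q)) (α p q) :=
      ι_mapBifunctorDesc _ p q rfl
    have : φ'' u'' = ((ι ≫ Φmap).app x (u ⊗ₜ[k] v)) (𝟙 x) := rfl
    rw [this, hone]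
    exact (coindLift_app_id k C x _ (α p q) (u ⊗ₜ[k] v)).trans (by rw [hα, hΦp, hΨq, hφu, hψv, one_mul])

end Tensor
end NilpotentAux

theorem no_nilpotent_objects_in_derived_category
    (hEI : ∀ (x : C) (f : x ⟶ x), IsIso f)
    (K : CochainComplex (C ⥤ ModuleCat k) ℤ)
    (hbdd : ∃ a b : ℤ, ∀ i : ℤ, (i < a ∨ b < i) → IsZero (K.X i))
    (n : ℕ) (hn : 1 ≤ n)
    (hnil : ∀ i : ℤ, (tensorPow k C K n).ExactAt i) :
    ∀ i : ℤ, K.ExactAt i := by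
  intro i
  by_contra hi
  obtain ⟨x, hw⟩ := NilpotentAux.hasWitness_of_not_exactAt hi
  have key : ∀ m : ℕ, NilpotentAux.HasWitness (tensorPow k C K (m+1)) x ((m : ℤ) * i + i) := by
    intro m
    induction m with
    | zero =>
      have e : tensorPow k C K 1 ≅ K := λ_ K
      have := NilpotentAux.HasWitness.of_iso e hw
      simpa using this
    | succ m ih =>
      have h2 := NilpotentAux.HasWitness.tensor k C ih hw
      have harith : (((m+1 : ℕ) : ℤ) * i + i) = ((m:ℤ)*i + i) + i := by push_cast; ring
      rw [harith]
      exact h2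
  obtain ⟨m, rfl⟩ : ∃ m : ℕ, n = m + 1 := ⟨n - 1, by omega⟩
  exact NilpotentAux.HasWitness.not_exactAt (key m) (hnil _)
end
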